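/- The first trace subshift of zot, taken two-sidedly (zot is bijective, so for c ∈ {0,1,2}^ℕ the orbit (zot^i(c)_0)_{i∈ℤ} is defined using the inverse for negative i), equals the set of bi-infinite concatenations of the blocks 00 and 12. Precisely: a sequence t ∈ {0,1,2}^ℤ satisfies t = (zot^i(c)_0)_{i∈ℤ} for some c ∈ {0,1,2}^ℕ if and only if there exists k ∈ {0,1} such that for every i ∈ ℤ, the pair (t_{2i+k}, t_{2i+k+1}) is either (0,0) or (1,2). -/

import Mathlib

/-- The permutations `ρ_a` of `{0,1,2}`: `ρ_0 = ρ_2 = (1 2)` and `ρ_1 = (0 1 2)`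
(i.e. `0↦1, 1↦2, 2↦0`).  `rho a x = ρ_a(x)`. -/
def rho (a x : Fin 3) : Fin 3 :=
  if a = 1 then ![1, 2, 0] x else ![0, 2, 1] x

/-- The one-sided cellular automaton `zot : {0,1,2}^ℕ → {0,1,2}^ℕ`,
`zot(c)_i = ρ_{c_{i+1}}(c_i)`. -/
def zot (c : ℕ → Fin 3) : ℕ → Fin 3 := fun i => rho (c (i + 1)) (c i)

/-- The permutations `π_a` of `{0,1,2}`: `π_0 = π_1 = (1 2)` and `π_2 : 0↦2, 2↦1, 1↦0`. -/
def piInv (a x : Fin 3) : Fin 3 :=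
  if a = 2 then ![2, 0, 1] x else ![0, 2, 1] x

/-- The inverse cellular automaton of `zot`, `zotInv(c)_i = π_{c_{i+1}}(c_i)`. -/
def zotInv (c : ℕ → Fin 3) : ℕ → Fin 3 := fun i => piInv (c (i + 1)) (c i)

/-- The `i`-th power of `zot` for `i ∈ ℤ`, using the inverse `zotInv` for negative `i`. -/
def zotZ (i : ℤ) (c : ℕ → Fin 3) : ℕ → Fin 3 :=
  if 0 ≤ i then zot^[i.toNat] c else zotInv^[(-i).toNat] c

lemma rho_one (a : Fin 3) : rho a 1 = 2 := by revert a; decide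

lemma rho_eq_two {a x : Fin 3} (h : rho a x = 2) : x = 1 := by revert h; revert a x; decide

lemma rho_zero_eq_one {a : Fin 3} (h : rho a 0 = 1) : a = 1 := by revert h; revert a; decide

lemma rho_two_eq_zero {a : Fin 3} (h : rho a 2 = 0) : a = 1 := by revert h; revert a; decide

lemma rho_one_zero : rho 1 0 = 1 := by decide

lemma piInv_rho (a b x : Fin 3) : piInv (rho b a) (rho a x) = x := by revert a b x; decide

lemma rho_piInv (a b x : Fin 3) : rho (piInv b a) (piInv a x) = x := by revert a b x; decide

lemma fin3_cases (x : Fin 3) : x = 0 ∨ x = 1 ∨ x = 2 := by revert x; decide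

lemma zot_zotInv (c : ℕ → Fin 3) : zot (zotInv c) = c :=
  funext fun i => rho_piInv (c (i+1)) (c (i+2)) (c i)

lemma zotInv_zot (c : ℕ → Fin 3) : zotInv (zot c) = c :=
  funext fun i => piInv_rho (c (i+1)) (c (i+2)) (c i)

lemma zotZ_succ (i : ℤ) (c : ℕ → Fin 3) : zotZ (i+1) c = zot (zotZ i c) := by
  unfold zotZ
  by_cases h : 0 ≤ i
  · rw [if_pos h, if_pos (by omega)]
    have e : (i+1).toNat = i.toNat + 1 := by omega
    rw [e, Function.iterate_succ_apply']
  · rw [if_neg h]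
    by_cases h1 : 0 ≤ i + 1
    · have hi : i = -1 := by omega
      subst hi
      rw [if_pos (by omega)]
      norm_num
      exact (zot_zotInv c).symm
    · rw [if_neg h1]
      have e : (-i).toNat = (-(i+1)).toNat + 1 := by omega
      rw [e, Function.iterate_succ_apply', zot_zotInv]

def IsBlock (k : ℤ) (u : ℤ → Fin 3) : Prop :=
  ∀ i : ℤ, (u (2*i+k) = 0 ∧ u (2*i+k+1) = 0) ∨ (u (2*i+k) = 1 ∧ u (2*i+k+1) = 2)

def nxt (k : ℤ) (u : ℤ → Fin 3) : ℤ → Fin 3 := fun j =>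
  if (j - k) % 2 = 0 then (if u (j-2) = u j then 0 else 2)
  else (if u (j-1) = u (j+1) then 0 else 1)

lemma nxt_block (k : ℤ) (u : ℤ → Fin 3) : IsBlock (k+1) (nxt k u) := by
  intro i
  have e1 : ¬((2*i+(k+1)) - k) % 2 = 0 := by omega
  have e2 : ((2*i+(k+1)+1) - k) % 2 = 0 := by omega
  unfold nxt
  rw [if_neg e1, if_pos e2]
  have a1 : 2*i+(k+1)-1 = 2*i+k := by ring
  have a2 : 2*i+(k+1)+1-2 = 2*i+k := by ring
  have a3 : 2*i+(k+1)+1 = 2*i+k+2 := by ring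
  rw [a1, a2, a3]
  by_cases hc : u (2*i+k) = u (2*i+k+2)
  · left; rw [if_pos hc, if_pos hc]; exact ⟨rfl, rfl⟩
  · right; rw [if_neg hc, if_neg hc]; exact ⟨rfl, rfl⟩

lemma nxt_drive (k : ℤ) (u : ℤ → Fin 3) (h : IsBlock k u) (j : ℤ) :
    u (j+1) = rho (nxt k u j) (u j) := by
  rcases Int.emod_two_eq (j - k) with hp | hp
  · obtain ⟨i, hi⟩ : ∃ i, j = 2*i+k := ⟨(j-k)/2, by omega⟩
    subst hi
    unfold nxt
    rw [if_pos hp]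
    rcases h i with ⟨h0, h1⟩ | ⟨h0, h1⟩ <;>
      rw [h0, h1] <;> split <;> decide
  · obtain ⟨i, hi⟩ : ∃ i, j = 2*i+k+1 := ⟨(j-k-1)/2, by omega⟩
    subst hi
    unfold nxt
    rw [if_neg (by omega)]
    have a1 : 2*i+k+1-1 = 2*i+k := by ring
    have a2 : (2*(i+1)+k) = 2*i+k+1+1 := by ring
    have hi1 := h (i+1)
    rw [a2] at hi1
    rw [a1]
    rcases h i with ⟨h0, h1⟩ | ⟨h0, h1⟩ <;> rcases hi1 with ⟨g0, _⟩ | ⟨g0, _⟩ <;>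
      rw [h0, h1, g0] <;> decide

def chain (k : ℤ) (t : ℤ → Fin 3) : ℕ → ℤ → Fin 3
  | 0 => t
  | n+1 => nxt (k + n) (chain k t n)

lemma chain_block (k : ℤ) (t : ℤ → Fin 3) (h : IsBlock k t) :
    ∀ n : ℕ, IsBlock (k + n) (chain k t n)
  | 0 => by simpa [chain] using h
  | n+1 => by
      have := nxt_block (k + n) (chain k t n)
      have e : (k + ((n : ℤ) + 1)) = (k + n) + 1 := by ring
      show IsBlock (k + ((n+1 : ℕ) : ℤ)) (nxt (k + n) (chain k t n))
      push_cast
      rw [e]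
      exact this

lemma chain_drive (k : ℤ) (t : ℤ → Fin 3) (h : IsBlock k t) (n : ℕ) (j : ℤ) :
    chain k t n (j+1) = rho (chain k t (n+1) j) (chain k t n j) :=
  nxt_drive (k + n) (chain k t n) (chain_block k t h n) j

lemma converse_exists (t : ℤ → Fin 3) (k : ℤ) (h : IsBlock k t) :
    ∃ c : ℕ → Fin 3, ∀ i : ℤ, t i = zotZ i c 0 := by
  refine ⟨fun n => chain k t n 0, ?_⟩
  have fwd : ∀ (m n : ℕ), (zot^[m] (fun n => chain k t n 0)) n = chain k t n m := by
    intro m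
    induction m with
    | zero => intro n; simp [chain]
    | succ m ih =>
        intro n
        rw [Function.iterate_succ_apply']
        show rho ((zot^[m] _) (n+1)) ((zot^[m] _) n) = _
        rw [ih, ih]
        have e : ((m+1 : ℕ) : ℤ) = (m : ℤ) + 1 := by push_cast; ring
        rw [e, chain_drive k t h n m]
  have bwd : ∀ (m n : ℕ), (zotInv^[m] (fun n => chain k t n 0)) n = chain k t n (-m) := by
    intro m
    induction m with
    | zero => intro n; simp [chain]
    | succ m ih =>
        intro n
        rw [Function.iterate_succ_apply']
        show piInv ((zotInv^[m] _) (n+1)) ((zotInv^[m] _) n) = _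
        rw [ih, ih]
        have e1 : chain k t n (-(m:ℤ)) =
            rho (chain k t (n+1) (-((m:ℕ)+1 : ℕ))) (chain k t n (-((m:ℕ)+1 : ℕ))) := by
          have e : (-(m:ℤ)) = (-(((m:ℕ)+1 : ℕ) : ℤ)) + 1 := by push_cast; ring
          rw [e]
          exact chain_drive k t h n _
        have e2 : chain k t (n+1) (-(m:ℤ)) =
            rho (chain k t (n+2) (-((m:ℕ)+1 : ℕ))) (chain k t (n+1) (-((m:ℕ)+1 : ℕ))) := by
          have e : (-(m:ℤ)) = (-(((m:ℕ)+1 : ℕ) : ℤ)) + 1 := by push_cast; ring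
          rw [e]
          have := chain_drive k t h (n+1) (-(((m:ℕ)+1 : ℕ) : ℤ))
          simpa using this
        rw [e1, e2, piInv_rho]
  intro i
  unfold zotZ
  by_cases hi : 0 ≤ i
  · rw [if_pos hi, fwd i.toNat 0]
    have : ((i.toNat : ℕ) : ℤ) = i := Int.toNat_of_nonneg hi
    rw [this]; rfl
  · rw [if_neg hi, bwd (-i).toNat 0]
    have : (-(((-i).toNat : ℕ) : ℤ)) = i := by omega
    rw [this]; rfl

lemma hU' (U : ℕ → ℤ → Fin 3) (hU : ∀ (n : ℕ) (i : ℤ), U n (i+1) = rho (U (n+1) i) (U n i))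
    (n : ℕ) (p q : ℤ) (h : q = p + 1) : U n q = rho (U (n+1) p) (U n p) := by
  rw [h]; exact hU n p

section
variable (U : ℕ → ℤ → Fin 3) (hU : ∀ (n : ℕ) (i : ℤ), U n (i+1) = rho (U (n+1) i) (U n i))

include hU in
lemma gap : ∀ r : ℕ, ∀ (n : ℕ) (j : ℤ), U n j = 1 →
    (∀ p : ℤ, j + 2 ≤ p → p < j + 2 + r → U n p = 0) →
    U n (j + 2 + r) = 1 → r % 2 = 0 := by
  intro r
  induction r using Nat.strong_induction_on with
  | _ r ih =>
    rcases r with _ | r1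
    · intro _ _ _ _ _; rfl
    rcases r1 with _ | r'
    · -- r = 1 : contradiction
      intro n j h1 hz hlast
      exfalso
      have h2 : U n (j+1) = 2 := by rw [hU n j, h1, rho_one]
      have hz0 : U n (j+2) = 0 := hz (j+2) (by omega) (by omega)
      have hA : U (n+1) (j+1) = 1 := by
        have := hU' U hU n (j+1) (j+2) (by ring)
        rw [hz0, h2] at this
        exact rho_two_eq_zero this.symm
      have hB : U (n+1) (j+2) = 2 := by
        rw [hU' U hU (n+1) (j+1) (j+2) (by ring), hA, rho_one]
      have hC : U (n+1) (j+2) = 1 := by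
        have := hU' U hU n (j+2) (j + 2 + (1:ℕ)) (by push_cast; ring)
        rw [hlast, hz0] at this
        exact rho_zero_eq_one this.symm
      rw [hB] at hC; exact absurd hC (by decide)
    · -- r = r' + 2
      intro n j h1 hz hlast
      have h2 : U n (j+1) = 2 := by rw [hU n j, h1, rho_one]
      have hz0 : U n (j+2) = 0 := hz (j+2) (by omega) (by push_cast; omega)
      have hA : U (n+1) (j+1) = 1 := by
        have := hU' U hU n (j+1) (j+2) (by ring)
        rw [hz0, h2] at this
        exact rho_two_eq_zero this.symm
      have hB : U (n+1) (j+2) = 2 := by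
        rw [hU' U hU (n+1) (j+1) (j+2) (by ring), hA, rho_one]
      -- zeros for the next level: positions j+3 .. j + 2 + r' (i.e. (j+1)+2 ≤ p < (j+1)+2+r')
      have key : ∀ m : ℕ, m < r' → U (n+1) (j+3+m) = 0 := by
        intro m
        induction m with
        | zero =>
            intro hm
            have e0 : j+3+((0:ℕ):ℤ) = j+3 := by push_cast; ring
            rw [e0]
            have hne : U (n+1) (j+3) ≠ 1 := by
              intro hone
              have := hU' U hU n (j+3) (j+4) (by ring)
              rw [hz (j+3) (by omega) (by push_cast; omega),
                  hz (j+4) (by omega) (by push_cast; omega), hone, rho_one_zero] at this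
              exact absurd this (by decide)
            have hv := hU' U hU (n+1) (j+2) (j+3) (by ring)
            rw [hB] at hv
            rcases fin3_cases (U (n+2) (j+2)) with h' | h' | h' <;> rw [h'] at hv
            · exact absurd (by rw [hv]; decide) hne
            · rw [hv]; decide
            · exact absurd (by rw [hv]; decide) hne
        | succ m ihm =>
            intro hm
            have hprev : U (n+1) (j+3+m) = 0 := ihm (by omega)
            have hne : U (n+1) (j+3+((m+1:ℕ):ℤ)) ≠ 1 := by
              intro hone
              have := hU' U hU n (j+3+((m+1:ℕ):ℤ)) (j+3+((m+1:ℕ):ℤ)+1) (by ring)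
              rw [hz (j+3+((m+1:ℕ):ℤ)) (by push_cast; omega) (by push_cast; omega),
                  hz (j+3+((m+1:ℕ):ℤ)+1) (by push_cast; omega) (by push_cast; omega),
                  hone, rho_one_zero] at this
              exact absurd this (by decide)
            have hv := hU' U hU (n+1) (j+3+m) (j+3+((m+1:ℕ):ℤ)) (by push_cast; ring)
            rw [hprev] at hv
            rcases fin3_cases (U (n+2) (j+3+m)) with h' | h' | h' <;> rw [h'] at hv
            · rw [hv]; decide
            · exact absurd (by rw [hv]; decide) hne
            · rw [hv]; decide
      have hC : U (n+1) (j + 2 + (r'+1:ℕ)) = 1 := by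
        have := hU' U hU n (j + 2 + (r'+1:ℕ)) (j + 2 + (r'+2:ℕ)) (by push_cast; ring)
        rw [hlast, hz (j + 2 + (r'+1:ℕ)) (by push_cast; omega) (by push_cast; omega)] at this
        exact rho_zero_eq_one this.symm
      have := ih r' (by omega) (n+1) (j+1) hA
        (by
          intro p hp1 hp2
          have hm : ∃ m : ℕ, (m : ℤ) = p - (j+3) ∧ m < r' := by
            refine ⟨(p - (j+3)).toNat, by omega, by omega⟩
          obtain ⟨m, hm1, hm2⟩ := hm
          have : p = j + 3 + m := by omega
          rw [this]; exact key m hm2)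
        (by
          have e : (j+1) + 2 + (r' : ℤ) = j + 2 + (r'+1:ℕ) := by push_cast; ring
          rw [e]; exact hC)
      omega

include hU in
lemma two_pred (j : ℤ) (h : U 0 j = 2) : U 0 (j-1) = 1 := by
  have hv := hU' U hU 0 (j-1) j (by ring)
  rw [h] at hv
  exact rho_eq_two hv.symm

include hU in
lemma parity : ∀ d : ℕ, ∀ a : ℤ, U 0 a = 1 → U 0 (a + d) = 1 → d % 2 = 0 := by
  intro d
  induction d using Nat.strong_induction_on with
  | _ d ih =>
    intro a h1 h2
    rcases d with _ | d1
    · rfl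
    rcases d1 with _ | d''
    · exfalso
      have : U 0 (a + 1) = 2 := by rw [hU 0 a, h1, rho_one]
      rw [show a + ((1:ℕ):ℤ) = a + 1 by push_cast; ring, this] at h2
      exact absurd h2 (by decide)
    · -- d = d'' + 2
      by_cases hall : ∀ p : ℤ, a + 2 ≤ p → p < a + (d''+2:ℕ) → U 0 p = 0
      · have := gap U hU d'' 0 a h1
          (by intro p hp1 hp2; exact hall p hp1 (by push_cast at hp2 ⊢; omega))
          (by rw [show a + 2 + (d'' : ℤ) = a + ((d''+2:ℕ):ℤ) by push_cast; ring]; exact h2)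
        omega
      · push_neg at hall
        obtain ⟨p, hp1, hp2, hp3⟩ := hall
        have hQex : ∃ m : ℕ, U 0 (a + 2 + (m:ℤ)) ≠ 0 := by
          refine ⟨(p - (a+2)).toNat, ?_⟩
          rw [show a + 2 + ((p - (a+2)).toNat : ℤ) = p by omega]
          exact hp3
        set m0 := Nat.find hQex with hm0def
        have hm0 : U 0 (a + 2 + (m0:ℤ)) ≠ 0 := Nat.find_spec hQex
        have hmin : ∀ m : ℕ, m < m0 → U 0 (a + 2 + (m:ℤ)) = 0 := by
          intro m hm
          have := Nat.find_min hQex hm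
          simpa using this
        have hm0lt : (m0 : ℤ) + 2 < (d''+2:ℕ) := by
          have hle : m0 ≤ (p - (a+2)).toNat := Nat.find_min' hQex (by
            rw [show a + 2 + ((p - (a+2)).toNat : ℤ) = p by omega]; exact hp3)
          push_cast
          omega
        -- U 0 (a+2+m0) = 1
        have hone : U 0 (a + 2 + (m0:ℤ)) = 1 := by
          rcases fin3_cases (U 0 (a + 2 + (m0:ℤ))) with h | h | h
          · exact absurd h hm0
          · exact h
          · exfalso
            have hv := hU' U hU 0 (a + 1 + (m0:ℤ)) (a + 2 + (m0:ℤ)) (by ring)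
            rw [h] at hv
            have hx1 : U 0 (a + 1 + (m0:ℤ)) = 1 := rho_eq_two hv.symm
            rcases Nat.eq_zero_or_pos m0 with hz | hz
            · rw [hz] at hx1
              have : U 0 (a + 1) = 2 := by rw [hU 0 a, h1, rho_one]
              rw [show a + 1 + ((0:ℕ):ℤ) = a + 1 by push_cast; ring, this] at hx1
              exact absurd hx1 (by decide)
            · have := hmin (m0 - 1) (by omega)
              rw [show a + 2 + ((m0 - 1 : ℕ):ℤ) = a + 1 + (m0:ℤ) by omega] at this
              rw [this] at hx1
              exact absurd hx1 (by decide)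
        -- gap over the zeros: m0 even
        have hm0even := gap U hU m0 0 a h1
          (by
            intro q hq1 hq2
            have := hmin (q - (a+2)).toNat (by omega)
            rwa [show a + 2 + (((q - (a+2)).toNat : ℕ):ℤ) = q by omega] at this)
          (by rw [show a + 2 + (m0:ℤ) = a + 2 + (m0:ℤ) by rfl]; exact hone)
        -- recurse
        have hrec := ih (d'' + 2 - (m0 + 2)) (by omega) (a + 2 + (m0:ℤ)) hone
          (by
            rw [show a + 2 + (m0:ℤ) + ((d'' + 2 - (m0+2) : ℕ):ℤ) = a + ((d''+2:ℕ):ℤ) by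
              push_cast; omega]
            exact h2)
        omega

include hU in
lemma parityZ (a b : ℤ) (ha : U 0 a = 1) (hb : U 0 b = 1) : (a - b) % 2 = 0 := by
  rcases le_total a b with h | h
  · have hd := parity U hU (b - a).toNat a ha
      (by rw [show a + ((b-a).toNat : ℤ) = b by omega]; exact hb)
    omega
  · have hd := parity U hU (a - b).toNat b hb
      (by rw [show b + ((a-b).toNat : ℤ) = a by omega]; exact ha)
    omega

end

lemma forward (t : ℤ → Fin 3) (c : ℕ → Fin 3) (ht : ∀ i : ℤ, t i = zotZ i c 0) :
    ∃ k : ℤ, (k = 0 ∨ k = 1) ∧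
      ∀ i : ℤ, (t (2 * i + k) = 0 ∧ t (2 * i + k + 1) = 0) ∨
               (t (2 * i + k) = 1 ∧ t (2 * i + k + 1) = 2) := by
  set U : ℕ → ℤ → Fin 3 := fun n i => zotZ i c n with hUdef
  have hU : ∀ (n : ℕ) (i : ℤ), U n (i+1) = rho (U (n+1) i) (U n i) := by
    intro n i
    show zotZ (i+1) c n = _
    rw [zotZ_succ]
    rfl
  have htU : ∀ i : ℤ, t i = U 0 i := ht
  by_cases hex : ∃ j : ℤ, U 0 j = 1
  · obtain ⟨j0, hj0⟩ := hex
    refine ⟨j0 % 2, by omega, ?_⟩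
    intro i
    rw [htU (2*i + j0 % 2), htU (2*i + j0 % 2 + 1)]
    rcases fin3_cases (U 0 (2*i + j0 % 2)) with h | h | h
    · rcases fin3_cases (U 0 (2*i + j0 % 2 + 1)) with g | g | g
      · exact Or.inl ⟨h, g⟩
      · exfalso
        have := parityZ U hU (2*i + j0 % 2 + 1) j0 g hj0
        omega
      · exfalso
        have := two_pred U hU (2*i + j0 % 2 + 1) g
        rw [show 2*i + j0 % 2 + 1 - 1 = 2*i + j0 % 2 by ring, h] at this
        exact absurd this (by decide)
    · refine Or.inr ⟨h, ?_⟩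
      rw [hU 0 (2*i + j0 % 2), h, rho_one]
    · exfalso
      have := two_pred U hU (2*i + j0 % 2) h
      have := parityZ U hU (2*i + j0 % 2 - 1) j0 this hj0
      omega
  · push_neg at hex
    refine ⟨0, Or.inl rfl, ?_⟩
    intro i
    rw [htU (2*i + 0), htU (2*i + 0 + 1)]
    have half : ∀ j : ℤ, U 0 j = 0 := by
      intro j
      rcases fin3_cases (U 0 j) with h | h | h
      · exact h
      · exact absurd h (hex j)
      · exact absurd (two_pred U hU j h) (hex (j-1))
    exact Or.inl ⟨half _, half _⟩

/-- The first trace subshift of `zot`, taken two-sidedly, equals the set of bi-infinite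
concatenations of the blocks `00` and `12`: a sequence `t ∈ {0,1,2}^ℤ` is of the form
`(zot^i(c)_0)_{i∈ℤ}` for some `c` iff there is `k ∈ {0,1}` such that for every `i ∈ ℤ`
the pair `(t_{2i+k}, t_{2i+k+1})` is `(0,0)` or `(1,2)`. -/
theorem zot_two_sided_trace_characterization (t : ℤ → Fin 3) :
    (∃ c : ℕ → Fin 3, ∀ i : ℤ, t i = zotZ i c 0) ↔
      (∃ k : ℤ, (k = 0 ∨ k = 1) ∧
        ∀ i : ℤ, (t (2 * i + k) = 0 ∧ t (2 * i + k + 1) = 0) ∨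
                 (t (2 * i + k) = 1 ∧ t (2 * i + k + 1) = 2)) := by
  constructor
  · rintro ⟨c, hc⟩
    exact forward t c hc
  · rintro ⟨k, _, hb⟩
    exact converse_exists t k hb
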